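/- Let K be a field and G a finite group acting faithfully on K by field automorphisms. Let V be a K-semilinear representation of G, i.e. a K-vector space with an action of G by additive automorphisms satisfying g•(c•v) = (g•c)•(g•v) for all g ∈ G, c ∈ K, v ∈ V. Then the natural K-linear map K ⊗_{K^G} V^G → V, c ⊗ v ↦ c•v, is bijective; in particular, V is spanned over K by its G-fixed vectors. -/

import Mathlib

set_option synthInstance.maxHeartbeats 1000000
set_option maxHeartbeats 1000000

/-- The group structure on `A ≃+ A` (composition) that older Mathlib provided as
`AddAut.group`; current Mathlib makes `AddAut A` an additive group instead. -/
instance AddAut.group (A : Type*) [Add A] : Group (A ≃+ A) where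
  mul g h := AddEquiv.trans h g
  one := AddEquiv.refl _
  inv := AddEquiv.symm
  mul_assoc _ _ _ := rfl
  one_mul _ := rfl
  mul_one _ := rfl
  inv_mul_cancel := AddEquiv.self_trans_symm

/-- The fixed subfield `K^G` of an action of `G` on a field `K` by field
automorphisms. -/
def fixedSubfield (K : Type) [Field K] (G : Type) [Group G]
    (act : G →* (K ≃+* K)) : Subfield K where
  carrier := {c | ∀ g, act g c = c}
  mul_mem' := fun {a b} ha hb g => by rw [map_mul, ha g, hb g]
  one_mem' := fun g => map_one _
  add_mem' := fun {a b} ha hb g => by rw [map_add, ha g, hb g]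
  zero_mem' := fun g => map_zero _
  neg_mem' := fun {a} ha g => by rw [map_neg, ha g]
  inv_mem' := fun a ha g => by rw [map_inv₀, ha g]

/-- The fixed vectors `V^G` of a `K`-semilinear representation `(V, ρ)` of `G`,
as a `K^G`-submodule of `V`. -/
def fixedSubmodule (K : Type) [Field K] (G : Type) [Group G] (act : G →* (K ≃+* K))
    (V : Type) [AddCommGroup V] [Module K V] (ρ : G →* (V ≃+ V))
    (hsemi : ∀ (g : G) (c : K) (v : V), ρ g (c • v) = act g c • ρ g v) :
    Submodule (fixedSubfield K G act) V where
  carrier := {v | ∀ g, ρ g v = v}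
  add_mem' := fun {a b} ha hb g => by rw [map_add, ha g, hb g]
  zero_mem' := fun g => map_zero _
  smul_mem' := fun c v hv g => by
    have : (c • v : V) = (↑c : K) • v := rfl
    rw [this, hsemi g ↑c v, c.2 g, hv g]

/-- The natural `K^G`-linear map `K ⊗_{K^G} V^G → V`, `c ⊗ v ↦ c • v`. -/
noncomputable def natTensorMap (K : Type) [Field K] (G : Type) [Group G]
    (act : G →* (K ≃+* K))
    (V : Type) [AddCommGroup V] [Module K V] (ρ : G →* (V ≃+ V))
    (hsemi : ∀ (g : G) (c : K) (v : V), ρ g (c • v) = act g c • ρ g v) :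
    TensorProduct (fixedSubfield K G act) K (fixedSubmodule K G act V ρ hsemi)
      →ₗ[fixedSubfield K G act] V :=
  TensorProduct.lift (LinearMap.mk₂ (fixedSubfield K G act)
    (fun (c : K) (v : fixedSubmodule K G act V ρ hsemi) => c • (v : V))
    (fun m₁ m₂ v => add_smul m₁ m₂ (v : V))
    (fun a m v => by
      show ((a • m) : K) • (v : V) = a • (m • (v : V))
      have h1 : (a • m : K) = (↑a : K) * m := rfl
      have h2 : a • (m • (v : V)) = (↑a : K) • (m • (v : V)) := rfl
      rw [h1, h2, mul_smul])
    (fun m v₁ v₂ => by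
      show m • ((v₁ + v₂ : _) : V) = m • (v₁ : V) + m • (v₂ : V)
      rw [Submodule.coe_add, smul_add])
    (fun a m v => by
      show m • ((a • v : _) : V) = a • (m • (v : V))
      have h1 : ((a • v : _) : V) = (↑a : K) • (v : V) := rfl
      have h2 : a • (m • (v : V)) = (↑a : K) • (m • (v : V)) := rfl
      rw [h1, h2, smul_comm]))

/-- Independence upgrade: a family of `G`-fixed vectors that is linearly
independent over `K^G` remains linearly independent over `K`. -/
theorem speiser_indep (K : Type) [Field K] (G : Type) [Group G]
    (act : G →* (K ≃+* K))
    (V : Type) [AddCommGroup V] [Module K V] (ρ : G →* (V ≃+ V))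
    (hsemi : ∀ (g : G) (c : K) (v : V), ρ g (c • v) = act g c • ρ g v)
    {ι : Type} (b : ι → fixedSubmodule K G act V ρ hsemi)
    (hb : LinearIndependent (fixedSubfield K G act) b) :
    LinearIndependent K (fun i => (b i : V)) := by
  classical
  have hbV : LinearIndependent (fixedSubfield K G act) (fun i => (b i : V)) :=
    hb.map' (fixedSubmodule K G act V ρ hsemi).subtype (Submodule.ker_subtype _)
  rw [linearIndependent_iff']
  intro s
  induction s using Finset.strongInductionOn with
  | _ s IH =>
  intro f hsum
  by_cases hz : ∃ i ∈ s, f i = 0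
  · obtain ⟨i0, hi0, hfi0⟩ := hz
    have hsum' : ∑ i ∈ s.erase i0, f i • (b i : V) = 0 := by
      rw [Finset.sum_erase s (by rw [hfi0, zero_smul])]; exact hsum
    have h' := IH _ (Finset.erase_ssubset hi0) f hsum'
    intro i hi
    rcases eq_or_ne i i0 with rfl | hne
    · exact hfi0
    · exact h' i (Finset.mem_erase.2 ⟨hne, hi⟩)
  · push_neg at hz
    intro i hi
    exfalso
    have ha0 : f i ≠ 0 := hz i hi
    set f' : ι → K := fun k => (f i)⁻¹ * f k with hf'
    have hfi1 : f' i = 1 := inv_mul_cancel₀ ha0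
    have hsum1 : ∑ k ∈ s, f' k • (b k : V) = 0 := by
      have : ∑ k ∈ s, f' k • (b k : V) = (f i)⁻¹ • ∑ k ∈ s, f k • (b k : V) := by
        rw [Finset.smul_sum]
        exact Finset.sum_congr rfl fun k _ => (mul_smul _ _ _)
      rw [this, hsum, smul_zero]
    have hfix : ∀ g : G, ∀ k ∈ s, act g (f' k) = f' k := by
      intro g
      have h2 : ∑ k ∈ s, act g (f' k) • (b k : V) = 0 := by
        have h2a := congrArg (ρ g) hsum1
        rw [map_sum, map_zero] at h2a
        calc ∑ k ∈ s, act g (f' k) • (b k : V)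
            = ∑ k ∈ s, ρ g (f' k • (b k : V)) := by
              refine Finset.sum_congr rfl fun k _ => ?_
              rw [hsemi g (f' k) ((b k : V)), (b k).2 g]
          _ = 0 := h2a
      have h4 : ∑ k ∈ s, (act g (f' k) - f' k) • (b k : V) = 0 := by
        simp only [sub_smul, Finset.sum_sub_distrib, h2, hsum1, sub_zero]
      have h3 : ∑ k ∈ s.erase i, (act g (f' k) - f' k) • (b k : V) = 0 := by
        rw [Finset.sum_erase s (by rw [hfi1, map_one, sub_self, zero_smul])]
        exact h4
      have h5 := IH _ (Finset.erase_ssubset hi) _ h3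
      intro k hk
      rcases eq_or_ne k i with rfl | hne
      · rw [hfi1, map_one]
      · exact sub_eq_zero.mp (h5 k (Finset.mem_erase.2 ⟨hne, hk⟩))
    set fF : ι → fixedSubfield K G act := fun k =>
      if h : ∀ g, act g (f' k) = f' k then ⟨f' k, h⟩ else 0 with hfF
    have hsum2 : ∑ k ∈ s, fF k • (b k : V) = 0 := by
      rw [← hsum1]
      refine Finset.sum_congr rfl fun k hk => ?_
      have hk' : ∀ g, act g (f' k) = f' k := fun g => hfix g k hk
      rw [hfF]; simp only [dif_pos hk']; rfl
    have h6 := linearIndependent_iff'.mp hbV s fF hsum2 i hi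
    have hi' : ∀ g, act g (f' i) = f' i := fun g => hfix g i hi
    rw [hfF] at h6
    simp only [dif_pos hi'] at h6
    have : f' i = 0 := congrArg Subtype.val h6
    rw [hfi1] at this
    exact one_ne_zero this

/-- **Speiser's generalization of Hilbert's Theorem 90.**  Let `G` be a finite
group acting faithfully on a field `K` by field automorphisms (via `act`), and
let `(V, ρ)` be a `K`-semilinear representation of `G` (`hsemi`).  Then the
natural map `K ⊗_{K^G} V^G → V`, `c ⊗ v ↦ c • v`, is bijective; in particular
`V` is spanned over `K` by its `G`-fixed vectors. -/
theorem hilbert90_speiser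
    (K : Type) [Field K] (G : Type) [Group G] [Finite G]
    (act : G →* (K ≃+* K))
    (hfaithful : ∀ g : G, (∀ c : K, act g c = c) → g = 1)
    (V : Type) [AddCommGroup V] [Module K V]
    (ρ : G →* (V ≃+ V))
    (hsemi : ∀ (g : G) (c : K) (v : V), ρ g (c • v) = act g c • ρ g v) :
    Function.Bijective (natTensorMap K G act V ρ hsemi) := by
  classical
  have : Fintype G := Fintype.ofFinite G
  constructor
  · -- Injectivity
    rw [injective_iff_map_eq_zero]
    intro x hx
    let F := fixedSubfield K G act
    let M := fixedSubmodule K G act V ρ hsemi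
    let bK := Module.Basis.ofVectorSpace F K
    let bM := Module.Basis.ofVectorSpace F M
    have hMK : LinearIndependent K (fun i => ((bM i : M) : V)) :=
      speiser_indep K G act V ρ hsemi (fun i => bM i) bM.linearIndependent
    have hind := linearIndependent_smul (R := F) (S := K) (A := V)
      bK.linearIndependent hMK
    let B := bK.tensorProduct bM
    have h2 : (⇑(natTensorMap K G act V ρ hsemi) ∘ ⇑B) =
        fun p => bK p.1 • ((bM p.2 : M) : V) := by
      funext p
      obtain ⟨k, j⟩ := p
      show natTensorMap K G act V ρ hsemi (B (k, j)) = _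
      have hB : B (k, j) = bK k ⊗ₜ[fixedSubfield K G act] bM j := Module.Basis.tensorProduct_apply bK bM k j
      rw [hB]
      simp only [natTensorMap, TensorProduct.lift.tmul, LinearMap.mk₂_apply]
      exact TensorProduct.lift.tmul _ _
    have hx0 : B.repr x = 0 := by
      refine linearIndependent_iff.mp hind (B.repr x) ?_
      show Finsupp.linearCombination F
        (fun p => bK p.1 • ((bM p.2 : M) : V)) (B.repr x) = 0
      have h1 : Finsupp.linearCombination F
          (⇑(natTensorMap K G act V ρ hsemi) ∘ ⇑B) (B.repr x) =
          natTensorMap K G act V ρ hsemi x := by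
        rw [← Finsupp.apply_linearCombination]; exact congrArg _ (B.linearCombination_repr x)
      rw [← h2, h1, hx]
    have hxx := B.linearCombination_repr x
    rw [hx0, map_zero] at hxx
    exact hxx.symm
  · -- Surjectivity
    intro v
    -- Dedekind independence of the automorphisms
    have hkey : ∀ g g' : G, (∀ c, act g c = act g' c) → g = g' := by
      intro g g' h
      have h1 : ∀ c : K, act (g'⁻¹ * g) c = c := by
        intro c
        have e1 : act (g'⁻¹ * g) c = act g'⁻¹ (act g c) := by rw [map_mul]; rfl
        have e2 : act g'⁻¹ (act g' c) = act (g'⁻¹ * g') c := by rw [map_mul]; rfl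
        rw [e1, h c, e2, inv_mul_cancel, map_one]
        rfl
      have := hfaithful _ h1
      exact (inv_mul_eq_one.mp this).symm
    have hLI : LinearIndependent K (fun g : G => (⇑(act g) : K → K)) := by
      have h0 := linearIndependent_monoidHom K K
      have hinj : Function.Injective (fun g : G => ((act g : K →+* K) : K →* K)) := by
        intro g g' h
        exact hkey g g' fun c => DFunLike.congr_fun h c
      exact h0.comp (fun g : G => ((act g : K →+* K) : K →* K)) hinj
    -- the evaluations span (G → K) over K
    have hspan : Submodule.span K (Set.range (fun a : K => (fun g : G => act g a))) = ⊤ := by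
      by_contra hne
      have hlt : Submodule.span K (Set.range (fun a : K => (fun g : G => act g a))) < ⊤ :=
        lt_top_iff_ne_top.mpr hne
      obtain ⟨φ, hφ0, hφ⟩ := Submodule.exists_dual_map_eq_bot_of_lt_top hlt inferInstance
      have hev : ∀ a : K, φ (fun g => act g a) = 0 := by
        intro a
        have hmem : (fun g : G => act g a) ∈
            Submodule.span K (Set.range (fun a : K => (fun g : G => act g a))) :=
          Submodule.subset_span ⟨a, rfl⟩
        have : φ (fun g => act g a) ∈ Submodule.map φ
            (Submodule.span K (Set.range (fun a : K => (fun g : G => act g a)))) :=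
          ⟨_, hmem, rfl⟩
        rw [hφ] at this
        exact this
      set d : G → K := fun g => φ (Pi.single g 1) with hd
      have hφx : ∀ x : G → K, φ x = ∑ g : G, x g * d g := by
        intro x
        conv_lhs => rw [pi_eq_sum_univ x]
        rw [map_sum]
        refine Finset.sum_congr rfl fun g _ => ?_
        rw [map_smul, smul_eq_mul]
        congr 1
        rw [hd]
        congr 1
        funext j
        by_cases hj : g = j
        · subst hj; simp [Pi.single_eq_same]
        · simp [hj, Pi.single_eq_of_ne (Ne.symm hj)]
      have hd0 : ∀ g : G, d g = 0 := by
        have hrel : ∑ g ∈ Finset.univ, d g • (⇑(act g) : K → K) = 0 := by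
          funext a
          rw [Finset.sum_apply]
          simp only [Pi.smul_apply, smul_eq_mul, Pi.zero_apply]
          rw [← hev a, hφx]
          exact Finset.sum_congr rfl fun g _ => mul_comm _ _
        exact fun g => linearIndependent_iff'.mp hLI Finset.univ d hrel g (Finset.mem_univ g)
      apply hφ0
      apply LinearMap.ext
      intro x
      rw [hφx]
      simp [hd0]
    -- write the delta function at 1 as a combination of evaluations
    have hδ : (Pi.single (1 : G) (1 : K) : G → K) ∈
        Submodule.span K (Set.range (fun a : K => (fun g : G => act g a))) := by
      rw [hspan]; trivial
    rw [Finsupp.mem_span_range_iff_exists_finsupp] at hδ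
    obtain ⟨c, hc⟩ := hδ
    -- the averaged vectors are fixed
    let w : K → V := fun a => ∑ g : G, act g a • ρ g v
    have hw : ∀ a, w a ∈ fixedSubmodule K G act V ρ hsemi := by
      intro a h
      show ρ h (∑ g : G, act g a • ρ g v) = ∑ g : G, act g a • ρ g v
      rw [map_sum]
      have hterm : ∀ g : G, ρ h (act g a • ρ g v) = act (h * g) a • ρ (h * g) v := by
        intro g
        rw [hsemi]
        have e1 : act h (act g a) = act (h * g) a := by rw [map_mul]; rfl
        have e2 : ρ h (ρ g v) = ρ (h * g) v := by rw [map_mul]; rfl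
        rw [e1, e2]
      simp only [hterm]
      exact Fintype.sum_equiv (Equiv.mulLeft h) _ _ (fun g => rfl)
    -- the combination recovers v
    have hv : (c.sum fun a ca => ca • w a) = v := by
      rw [Finsupp.sum]
      have hterm : ∀ a, c a • w a = ∑ g : G, (c a * act g a) • ρ g v := by
        intro a
        show c a • (∑ g : G, act g a • ρ g v) = _
        rw [Finset.smul_sum]
        exact Finset.sum_congr rfl fun g _ => (mul_smul _ _ _).symm
      simp only [hterm]
      rw [Finset.sum_comm]
      have hcg : ∀ g : G, (∑ a ∈ c.support, c a * act g a) = (Pi.single (1 : G) (1 : K) : G → K) g := by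
        intro g
        have h1 := congrFun hc g
        simp only [Finsupp.sum, Finset.sum_apply, Pi.smul_apply, smul_eq_mul] at h1
        exact h1
      calc ∑ g : G, ∑ a ∈ c.support, (c a * act g a) • ρ g v
          = ∑ g : G, (∑ a ∈ c.support, c a * act g a) • ρ g v := by
            refine Finset.sum_congr rfl fun g _ => ?_
            rw [Finset.sum_smul]
        _ = ∑ g : G, ((Pi.single (1 : G) (1 : K) : G → K) g) • ρ g v := by
            refine Finset.sum_congr rfl fun g _ => by rw [hcg g]
        _ = v := by
            rw [Finset.sum_eq_single (1 : G)]
            · rw [Pi.single_eq_same, one_smul]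
              show ρ 1 v = v
              rw [map_one]; rfl
            · intro g _ hg
              rw [Pi.single_eq_of_ne hg, zero_smul]
            · intro h; exact absurd (Finset.mem_univ 1) h
    refine ⟨c.sum fun a ca => ca ⊗ₜ[fixedSubfield K G act] (⟨w a, hw a⟩ : fixedSubmodule K G act V ρ hsemi), ?_⟩
    rw [map_finsuppSum, ← hv]
    refine Finsupp.sum_congr fun a _ => ?_
    show natTensorMap K G act V ρ hsemi (c a ⊗ₜ[fixedSubfield K G act] (⟨w a, hw a⟩ : fixedSubmodule K G act V ρ hsemi)) = c a • w a
    simp only [natTensorMap, TensorProduct.lift.tmul, LinearMap.mk₂_apply]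
    exact TensorProduct.lift.tmul _ _
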